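/- Let n ≥ 2 and let S, V be reals with V > 0 and S² < nV (interpreted as S = ∑x_i, V = ∑x_i² for data not all proportional). Then ∫_ℝ [ (e^{−nθ²/2}/Γ(n/2)) ∫₀^∞ y^{n/2−1} exp(−y + θS√(2y/V)) dy ] dθ = √(2π/n) · (nV/(nV − S²))^{n/2}. -/

import Mathlib

open MeasureTheory Real Set

lemma gauss_integrable (a b : ℝ) (ha : 0 < a) :
    Integrable (fun x : ℝ => Real.exp (-a * x ^ 2 + b * x)) := by
  have h := (integrable_cexp_quadratic' (b := (-a : ℂ)) (by simpa using ha) b 0).re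
  refine h.congr (Filter.Eventually.of_forall fun x => ?_)
  have h1 : (-a : ℂ) * (x:ℂ) ^ 2 + (b:ℂ) * x + 0 = ((-a * x ^ 2 + b * x : ℝ) : ℂ) := by
    push_cast; ring
  simp only [h1, ← Complex.ofReal_exp, RCLike.re_to_complex, Complex.ofReal_re]

lemma gauss_integral (a b : ℝ) (ha : 0 < a) :
    ∫ x : ℝ, Real.exp (-a * x ^ 2 + b * x)
      = Real.sqrt (Real.pi / a) * Real.exp (b ^ 2 / (4 * a)) := by
  have hcpx : ∀ x : ℝ, ((Real.exp (-a * x ^ 2 + b * x) : ℝ) : ℂ)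
      = Complex.exp ((-a : ℂ) * (x:ℂ) ^ 2 + (b:ℂ) * x + 0) := by
    intro x
    rw [Complex.ofReal_exp]
    congr 1
    push_cast; ring
  have key := integral_cexp_quadratic (b := (-a : ℂ)) (by simpa using ha) b 0
  apply Complex.ofReal_injective
  rw [Complex.ofReal_mul]
  rw [show ((∫ x : ℝ, Real.exp (-a * x ^ 2 + b * x) : ℝ) : ℂ)
      = ∫ x : ℝ, ((Real.exp (-a * x ^ 2 + b * x) : ℝ) : ℂ) from integral_ofReal.symm]
  simp_rw [hcpx]
  rw [key]
  have h1 : ((Real.pi : ℂ) / -(-a : ℂ)) = ((Real.pi / a : ℝ) : ℂ) := by push_cast; ring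
  have h2 : ((Real.pi / a : ℝ) : ℂ) ^ (1/2 : ℂ) = ((Real.sqrt (Real.pi / a) : ℝ) : ℂ) := by
    rw [Real.sqrt_eq_rpow, Complex.ofReal_cpow (by positivity)]
    norm_num
  rw [h1, h2]
  congr 1
  have h3 : (0 : ℂ) - (b:ℂ)^2 / (4 * (-a : ℂ)) = ((b^2/(4*a) : ℝ) : ℂ) := by
    push_cast; field_simp; ring
  rw [h3, ← Complex.ofReal_exp]

theorem stmt_11 (n : ℕ) (hn : 2 ≤ n) (S V : ℝ) (hV : 0 < V) (hSV : S ^ 2 < n * V) :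
    (∫ θ : ℝ, (Real.exp (-(n : ℝ) * θ ^ 2 / 2) / Real.Gamma ((n : ℝ) / 2)) *
        ∫ y in Set.Ioi (0 : ℝ),
          y ^ ((n : ℝ) / 2 - 1) * Real.exp (-y + θ * S * Real.sqrt (2 * y / V)))
      = Real.sqrt (2 * Real.pi / n) *
          ((n * V) / (n * V - S ^ 2)) ^ ((n : ℝ) / 2) := by
  have hn0 : (0:ℝ) < n := by positivity
  have hp : (0:ℝ) < (n:ℝ)/2 := by positivity
  have hΓ : 0 < Real.Gamma ((n:ℝ)/2) := Real.Gamma_pos_of_pos hp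
  have hnV : (0:ℝ) < (n:ℝ) * V := by positivity
  have hr : (0:ℝ) < 1 - S^2/((n:ℝ)*V) := by
    rw [sub_pos, div_lt_one hnV]; exact hSV
  set F : ℝ → ℝ → ℝ := fun θ y =>
    (Real.exp (-(n : ℝ) * θ ^ 2 / 2) / Real.Gamma ((n : ℝ) / 2)) *
      (y ^ ((n : ℝ) / 2 - 1) * Real.exp (-y + θ * S * Real.sqrt (2 * y / V))) with hF
  -- pointwise rewrite of F as constant-in-θ times gaussian
  have hFeq : ∀ (y : ℝ) (θ : ℝ), F θ y
      = (y ^ ((n : ℝ) / 2 - 1) * Real.exp (-y) / Real.Gamma ((n:ℝ)/2)) *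
        Real.exp (-((n:ℝ)/2) * θ^2 + (S * Real.sqrt (2*y/V)) * θ) := by
    intro y θ
    rw [hF]
    simp only
    have key : Real.exp (-(n:ℝ) * θ^2 / 2) * Real.exp (-y + θ * S * Real.sqrt (2*y/V))
        = Real.exp (-y) * Real.exp (-((n:ℝ)/2) * θ^2 + (S * Real.sqrt (2*y/V)) * θ) := by
      rw [← Real.exp_add, ← Real.exp_add]; congr 1; ring
    rw [show Real.exp (-(n:ℝ) * θ^2 / 2) / Real.Gamma ((n:ℝ)/2) *
        (y ^ ((n : ℝ) / 2 - 1) * Real.exp (-y + θ * S * Real.sqrt (2*y/V)))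
        = (Real.exp (-(n:ℝ) * θ^2 / 2) * Real.exp (-y + θ * S * Real.sqrt (2*y/V))) *
          y ^ ((n : ℝ) / 2 - 1) / Real.Gamma ((n:ℝ)/2) by ring, key]
    ring
  -- inner θ-integral for y > 0
  have hinner : ∀ y : ℝ, 0 < y → (∫ θ : ℝ, F θ y)
      = (Real.sqrt (2 * Real.pi / n) / Real.Gamma ((n:ℝ)/2)) *
        (y ^ ((n : ℝ) / 2 - 1) * Real.exp (-((1 - S^2/((n:ℝ)*V)) * y))) := by
    intro y hy
    simp_rw [hFeq y, integral_const_mul, gauss_integral _ _ hp]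
    have hsq : (S * Real.sqrt (2*y/V))^2 = S^2 * (2*y/V) := by
      rw [mul_pow, Real.sq_sqrt (by positivity)]
    rw [hsq]
    have h1 : Real.pi / ((n:ℝ)/2) = 2 * Real.pi / n := by field_simp
    have h2 : S^2 * (2*y/V) / (4 * ((n:ℝ)/2)) = S^2 * y / ((n:ℝ)*V) := by
      field_simp; ring
    rw [h1, h2]
    rw [show -((1 - S^2/((n:ℝ)*V)) * y) = -y + S^2 * y / ((n:ℝ)*V) by field_simp; ring]
    rw [Real.exp_add]
    ring
  -- integrability on the product
  have hmeas : AEStronglyMeasurable (Function.uncurry F)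
      (volume.prod (volume.restrict (Set.Ioi (0:ℝ)))) := by
    apply Measurable.aestronglyMeasurable
    simp only [hF]
    unfold Function.uncurry
    fun_prop
  have hint : Integrable (Function.uncurry F) (volume.prod (volume.restrict (Set.Ioi (0:ℝ)))) := by
    rw [MeasureTheory.integrable_prod_iff' hmeas]
    constructor
    · refine Filter.Eventually.of_forall fun y => ?_
      have := ((gauss_integrable ((n:ℝ)/2) (S * Real.sqrt (2*y/V)) hp).const_mul
        (y ^ ((n : ℝ) / 2 - 1) * Real.exp (-y) / Real.Gamma ((n:ℝ)/2)))
      exact this.congr (Filter.Eventually.of_forall fun θ => (hFeq y θ).symm)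
    · have hae : (fun y => ∫ θ : ℝ, ‖Function.uncurry F (θ, y)‖)
          =ᵐ[volume.restrict (Set.Ioi (0:ℝ))] (fun y =>
            (Real.sqrt (2 * Real.pi / n) / Real.Gamma ((n:ℝ)/2)) *
              (y ^ ((n : ℝ) / 2 - 1) * Real.exp (-((1 - S^2/((n:ℝ)*V)) * y)))) := by
        refine Filter.eventuallyEq_of_mem (self_mem_ae_restrict measurableSet_Ioi)
          fun y hy => ?_
        simp only [Function.uncurry]
        have hnn : ∀ θ : ℝ, ‖F θ y‖ = F θ y := by
          intro θ
          rw [Real.norm_eq_abs, abs_of_nonneg]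
          rw [hF]
          have : (0:ℝ) ≤ y ^ ((n : ℝ) / 2 - 1) := Real.rpow_nonneg (le_of_lt hy) _
          positivity
        simp_rw [hnn]
        exact hinner y hy
      refine (Integrable.congr ?_ hae.symm)
      apply MeasureTheory.Integrable.const_mul
      have : IntegrableOn (fun y : ℝ => y ^ ((n:ℝ)/2-1) *
          Real.exp (-(1 - S^2/((n:ℝ)*V)) * y ^ (1:ℝ))) (Set.Ioi 0) :=
        integrableOn_rpow_mul_exp_neg_mul_rpow (by linarith) one_pos hr
      refine this.congr_fun (fun y hy => ?_) measurableSet_Ioi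
      simp only [Real.rpow_one]
      ring_nf
  -- main computation
  calc (∫ θ : ℝ, (Real.exp (-(n : ℝ) * θ ^ 2 / 2) / Real.Gamma ((n : ℝ) / 2)) *
        ∫ y in Set.Ioi (0 : ℝ),
          y ^ ((n : ℝ) / 2 - 1) * Real.exp (-y + θ * S * Real.sqrt (2 * y / V)))
      = ∫ θ : ℝ, ∫ y in Set.Ioi (0:ℝ), F θ y := by
        simp_rw [hF, ← MeasureTheory.integral_const_mul]
    _ = ∫ y in Set.Ioi (0:ℝ), ∫ θ : ℝ, F θ y := MeasureTheory.integral_integral_swap hint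
    _ = ∫ y in Set.Ioi (0:ℝ), (Real.sqrt (2 * Real.pi / n) / Real.Gamma ((n:ℝ)/2)) *
          (y ^ ((n : ℝ) / 2 - 1) * Real.exp (-((1 - S^2/((n:ℝ)*V)) * y))) := by
        refine setIntegral_congr_fun measurableSet_Ioi fun y hy => hinner y hy
    _ = (Real.sqrt (2 * Real.pi / n) / Real.Gamma ((n:ℝ)/2)) *
          ((1/(1 - S^2/((n:ℝ)*V))) ^ ((n:ℝ)/2) * Real.Gamma ((n:ℝ)/2)) := by
        rw [MeasureTheory.integral_const_mul,
          Real.integral_rpow_mul_exp_neg_mul_Ioi hp hr]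
    _ = Real.sqrt (2 * Real.pi / n) * ((n * V) / (n * V - S ^ 2)) ^ ((n : ℝ) / 2) := by
        rw [show (1/(1 - S^2/((n:ℝ)*V))) = (n * V) / (n * V - S ^ 2) by
          field_simp]
        field_simp
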